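/- Suppose that for all i ≥ 0 the transformation formula 𝓕^Dw_{a^{(i)}}(t) = ±((−1)^s t)^{l_i} 𝓕^Dw_{a^{(i)}}(t^{-1}) holds (mod p^n for all n, in the appropriate Laurent sense). Then for all n ≥ 1, 0 ≤ d ≤ n, 0 ≤ m ≤ p^n−1, and k ≥ 0: ∑_{i≡k mod p^{n−d}, 0≤i≤m, i+j=m} A_i A_{p^n−j−1} ≡ ∑_{p^n−j'−1 ≡ −k−a mod p^{n−d}, 0≤j'≤m, i'+j'=m} A_{i'} A_{p^n−j'−1} mod p^{d+1}. -/

import Mathlib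

open Polynomial Classical

noncomputable section

set_option maxHeartbeats 1600000

namespace DworkAux

variable {S : Type*} [CommRing S]

lemma dvd_coeff_mul {t : S} {P Q : S[X]} (h : ∀ j, t ∣ P.coeff j) :
    ∀ j, t ∣ (P * Q).coeff j := by
  intro j
  rw [Polynomial.coeff_mul]
  exact Finset.dvd_sum fun x _ => Dvd.dvd.mul_right (h x.1) _

lemma dvd_coeff_mul' {t : S} {P Q : S[X]} (h : ∀ j, t ∣ Q.coeff j) :
    ∀ j, t ∣ (P * Q).coeff j := by
  intro j; rw [mul_comm]; exact dvd_coeff_mul h j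

lemma cancel_C {t z z' : S} {P : S[X]} (hz : z' * z = 1)
    (h : ∀ j, t ∣ (C z * P).coeff j) : ∀ j, t ∣ P.coeff j := by
  intro j
  have h2 := dvd_coeff_mul' (P := C z') h j
  rwa [← mul_assoc, ← C_mul, hz, C_1, one_mul] at h2

lemma cancel_X_pow {t : S} {l : ℕ} {P : S[X]} (h : ∀ j, t ∣ (X ^ l * P).coeff j) :
    ∀ j, t ∣ P.coeff j := by
  intro j
  have := h (j + l)
  rwa [Polynomial.coeff_X_pow_mul] at this

lemma cancel_coeff_zero_one {t : S} {P W : S[X]} (hW : W.coeff 0 = 1)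
    (h : ∀ j, t ∣ (P * W).coeff j) : ∀ j, t ∣ P.coeff j := by
  intro j
  induction j using Nat.strong_induction_on with
  | _ j ih =>
    have hm := h j
    have key : P.coeff j
        = (P * W).coeff j - ∑ i ∈ Finset.range j, P.coeff i * W.coeff (j - i) := by
      rw [Polynomial.coeff_mul, Finset.Nat.sum_antidiagonal_eq_sum_range_succ_mk,
        Finset.sum_range_succ, Nat.sub_self, hW, mul_one]
      ring
    rw [key]
    exact dvd_sub hm (Finset.dvd_sum fun i hi =>
      Dvd.dvd.mul_right (ih i (Finset.mem_range.1 hi)) _)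

lemma sum_reindex {β : Type*} [AddCommMonoid β] (f : ℕ → β) (N M : ℕ) (ι : ℕ → ℕ)
    (hmem : ∀ v < M, ι v < N)
    (hinj : ∀ v₁, v₁ < M → ∀ v₂, v₂ < M → ι v₁ = ι v₂ → v₁ = v₂)
    (hvan : ∀ k < N, (∀ v < M, ι v ≠ k) → f k = 0) :
    ∑ k ∈ Finset.range N, f k = ∑ v ∈ Finset.range M, f (ι v) := by
  have hinj' : Set.InjOn ι (Finset.range M) := by
    intro x hx y hy hxy
    exact hinj x (Finset.mem_range.1 hx) y (Finset.mem_range.1 hy) hxy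
  have himg : ∑ v ∈ Finset.range M, f (ι v) = ∑ x ∈ (Finset.range M).image ι, f x :=
    (Finset.sum_image hinj').symm
  rw [himg]
  refine (Finset.sum_subset ?_ ?_).symm
  · intro x hx
    obtain ⟨v, hv, rfl⟩ := Finset.mem_image.1 hx
    exact Finset.mem_range.2 (hmem v (Finset.mem_range.1 hv))
  · intro k hk hk'
    refine hvan k (Finset.mem_range.1 hk) fun v hv hvk => hk' ?_
    exact Finset.mem_image.2 ⟨v, Finset.mem_range.2 hv, hvk⟩

lemma reflect_sum (b : ℕ → S) (N : ℕ) (hN : 0 < N) :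
    Polynomial.reflect (N - 1) (∑ k ∈ Finset.range N, C (b k) * X ^ k)
      = ∑ k ∈ Finset.range N, C (b (N - 1 - k)) * X ^ k := by
  have h1 : Polynomial.reflect (N - 1) (∑ k ∈ Finset.range N, C (b k) * X ^ k)
      = ∑ k ∈ Finset.range N, Polynomial.reflect (N - 1) (C (b k) * X ^ k) := by
    induction (Finset.range N) using Finset.induction_on with
    | empty => simp [Polynomial.reflect_zero]
    | insert _ _ h ih =>
      rw [Finset.sum_insert h, Finset.sum_insert h, Polynomial.reflect_add, ih]
  have h2 : ∀ k ∈ Finset.range N, Polynomial.reflect (N - 1) (C (b k) * X ^ k)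
      = C (b k) * X ^ (N - 1 - k) := by
    intro k hk
    rw [Polynomial.reflect_C_mul_X_pow,
      Polynomial.revAt_le (by have := Finset.mem_range.1 hk; omega)]
  rw [h1, Finset.sum_congr rfl h2,
    ← Finset.sum_range_reflect (fun k => C (b (N - 1 - k)) * X ^ k) N]
  apply Finset.sum_congr rfl
  intro k hk
  have hk' := Finset.mem_range.1 hk
  have hkk : N - 1 - (N - 1 - k) = k := by omega
  rw [hkk]

/-- the grand algebraic identity behind the induction step -/
lemma grand {F1 Fu R1 Ru g1 gu h1 hu x v cc E1 Eu Ph : S}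
    {l L L' d1 pp : ℕ} (hL : L = l + pp * L') (hp : pp = d1 + 1)
    (hE1 : E1 = F1 * (x ^ d1 * h1) - cc * x ^ l * R1 * g1)
    (hEu : Eu = Fu * (v ^ d1 * x ^ d1 * hu) - cc * v ^ l * x ^ l * Ru * gu)
    (hPh : Ph = Fu * R1 - v ^ (1 + L) * F1 * Ru) :
    cc * x ^ l * v ^ l * Ph * g1 * gu
      = (F1 * Fu * x ^ d1 * v ^ l) * (gu * h1 - v ^ (pp * (1 + L')) * (g1 * hu))
        - (v ^ l * Fu * gu) * E1 + (v ^ (1 + L) * F1 * g1) * Eu := by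
  subst hL hp hE1 hEu hPh
  ring

section TTsec

variable {p : ℕ} [Fact p.Prime]

/-- the basic "two-variable" polynomial gadget: `∑_{k<B} (b k · w^k) X^{ck}` -/
def TT {S : Type*} [CommRing S] [Algebra ℤ_[p] S] (w : S) (c : ℕ) (b : ℕ → ℤ_[p]) (B : ℕ) :
    S[X] :=
  ∑ k ∈ Finset.range B, C (algebraMap ℤ_[p] S (b k) * w ^ k) * X ^ (c * k)

variable {S : Type*} [CommRing S] [Algebra ℤ_[p] S]

lemma theta_TT (w : S) (b : ℕ → ℤ_[p]) (B : ℕ) :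
    Polynomial.aeval (R := ℤ_[p]) (C w * X) (∑ k ∈ Finset.range B, C (b k) * X ^ k)
      = TT w 1 b B := by
  rw [map_sum]
  refine Finset.sum_congr rfl fun k _ => ?_
  rw [map_mul, map_pow, Polynomial.aeval_X, Polynomial.aeval_C,
    Polynomial.algebraMap_apply, mul_pow, ← map_pow (C : S →+* S[X]), one_mul,
    ← mul_assoc, ← Polynomial.C_mul]

lemma coeff_TT_one (w : S) (b : ℕ → ℤ_[p]) (B j : ℕ) :
    (TT w 1 b B).coeff j
      = if j < B then algebraMap ℤ_[p] S (b j) * w ^ j else 0 := by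
  unfold TT
  rw [Polynomial.finset_sum_coeff]
  simp only [Polynomial.coeff_C_mul, Polynomial.coeff_X_pow, one_mul, mul_ite, mul_one,
    mul_zero]
  rw [Finset.sum_ite_eq (Finset.range B) j (fun k => algebraMap ℤ_[p] S (b k) * w ^ k)]
  simp [Finset.mem_range]

lemma coeff_TT_zero (w : S) (c : ℕ) (b : ℕ → ℤ_[p]) (B : ℕ) (hc : 0 < c) (hB : 0 < B) :
    (TT w c b B).coeff 0 = algebraMap ℤ_[p] S (b 0) := by
  unfold TT
  rw [Polynomial.finset_sum_coeff]
  rw [Finset.sum_eq_single 0]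
  · simp
  · intro k hk hk0
    simp only [Polynomial.coeff_C_mul, Polynomial.coeff_X_pow]
    have hck : 0 < c * k := Nat.mul_pos hc (Nat.pos_of_ne_zero hk0)
    rw [if_neg (by omega), mul_zero]
  · intro h0
    exact absurd (Finset.mem_range.2 hB) h0

lemma TT_map {S' : Type*} [CommRing S'] [Algebra ℤ_[p] S']
    (φ : S →+* S') (hφ : ∀ x : ℤ_[p], φ (algebraMap ℤ_[p] S x) = algebraMap ℤ_[p] S' x)
    (w : S) (c : ℕ) (b : ℕ → ℤ_[p]) (B : ℕ) :
    (TT w c b B).map φ = TT (φ w) c b B := by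
  unfold TT
  rw [Polynomial.map_sum]
  refine Finset.sum_congr rfl fun k _ => ?_
  rw [Polynomial.map_mul, Polynomial.map_pow, Polynomial.map_X, Polynomial.map_C,
    map_mul, map_pow, hφ]

lemma TT_expand (p' : ℕ) (w : S) (c : ℕ) (b : ℕ → ℤ_[p]) (B : ℕ) :
    Polynomial.expand S p' (TT w c b B) = TT w (p' * c) b B := by
  unfold TT
  rw [map_sum]
  refine Finset.sum_congr rfl fun k _ => ?_
  rw [map_mul, map_pow, Polynomial.expand_X, Polynomial.expand_C, ← pow_mul,
    mul_assoc]

lemma TT_G (n : ℕ) (hn : 1 ≤ n) (w : S) (b : ℕ → ℤ_[p]) :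
    TT w 1 (fun k => if p ∣ k then b (k / p) else 0) (p ^ n)
      = TT (w ^ p) p b (p ^ (n - 1)) := by
  have hp : 0 < p := (Fact.out : p.Prime).pos
  have hpn : p * p ^ (n - 1) = p ^ n := by
    rw [← pow_succ']
    congr 1
    omega
  unfold TT
  rw [sum_reindex _ (p ^ n) (p ^ (n - 1)) (fun v => p * v) ?_ ?_ ?_]
  · refine Finset.sum_congr rfl fun v hv => ?_
    have h1 : p ∣ p * v := dvd_mul_right p v
    simp only [h1, if_true, Nat.mul_div_cancel_left v hp, one_mul, pow_mul]
  · intro v hv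
    show p * v < p ^ n
    have : p * v < p * p ^ (n - 1) := (Nat.mul_lt_mul_left hp).2 hv
    omega
  · intro v₁ h₁ v₂ h₂ he
    exact Nat.eq_of_mul_eq_mul_left hp he
  · intro k hk hno
    by_cases hdk : p ∣ k
    · obtain ⟨v, rfl⟩ := hdk
      have hv : v < p ^ (n - 1) := by
        by_contra hge
        push_neg at hge
        have : p * p ^ (n - 1) ≤ p * v := Nat.mul_le_mul le_rfl hge
        omega
      exact absurd rfl (hno v hv)
    · simp [hdk]

lemma TT_RG (n : ℕ) (hn : 1 ≤ n) (w : S) (b : ℕ → ℤ_[p]) :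
    TT w 1 (fun j => if p ∣ (p ^ n - 1 - j) then b ((p ^ n - 1 - j) / p) else 0) (p ^ n)
      = C (w ^ (p - 1)) * X ^ (p - 1)
        * TT (w ^ p) p (fun v => b (p ^ (n - 1) - 1 - v)) (p ^ (n - 1)) := by
  have hp : 0 < p := (Fact.out : p.Prime).pos
  have hpn : p * p ^ (n - 1) = p ^ n := by
    rw [← pow_succ']; congr 1; omega
  set M := p ^ (n - 1) with hM
  have hQ1 : 1 ≤ p ^ n := Nat.one_le_pow _ _ hp
  unfold TT
  rw [sum_reindex _ (p ^ n) M (fun v => p ^ n - 1 - p * v) ?_ ?_ ?_]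
  · rw [Finset.mul_sum]
    conv_rhs => rw [← Finset.sum_range_reflect]
    refine Finset.sum_congr rfl fun v hv => ?_
    have hv' : v < M := Finset.mem_range.1 hv
    beta_reduce
    have hvp : p * (v + 1) ≤ p * M := Nat.mul_le_mul le_rfl (by omega)
    have hvp' : p * (v + 1) = p * v + p := by ring
    obtain ⟨dd, hdd⟩ : ∃ dd, M - 1 - v = dd := ⟨_, rfl⟩
    have hdd' : v + 1 + dd = M := by omega
    have hQd : p * (v + 1 + dd) = p ^ n := by rw [hdd', hpn]
    have hQd' : p * (v + 1 + dd) = p * v + p + p * dd := by ring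
    have e1 : p ^ n - 1 - (p ^ n - 1 - p * v) = p * v := by omega
    have e3 : M - 1 - (M - 1 - v) = v := by omega
    have e5 : p ^ n - 1 - p * v = (p - 1) + p * dd := by omega
    simp only [hdd, e1, e3]
    have h1 : p ∣ p * v := dvd_mul_right p v
    simp only [h1, if_true, Nat.mul_div_cancel_left v hp, one_mul, e5]
    rw [← pow_mul w p dd]
    have e6 : p ^ (n - 1) - 1 - dd = v := by omega
    rw [e6]
    simp only [Polynomial.C_mul, pow_add]
    ring
  · intro v hv
    show p ^ n - 1 - p * v < p ^ n
    have := Nat.sub_le (p ^ n - 1) (p * v)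
    omega
  · intro v₁ h₁ v₂ h₂ he
    have he' : p ^ n - 1 - p * v₁ = p ^ n - 1 - p * v₂ := he
    have l₁ : p * v₁ < p * M := (Nat.mul_lt_mul_left hp).2 h₁
    have l₂ : p * v₂ < p * M := (Nat.mul_lt_mul_left hp).2 h₂
    have : p * v₁ = p * v₂ := by omega
    exact Nat.eq_of_mul_eq_mul_left hp this
  · intro k hk hno
    by_cases hdk : p ∣ (p ^ n - 1 - k)
    · obtain ⟨v, hvk⟩ := hdk
      have hle : p * v ≤ p ^ n - 1 := hvk ▸ Nat.sub_le _ _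
      have hvM : v < M := by
        by_contra hge
        push_neg at hge
        have : p * M ≤ p * v := Nat.mul_le_mul le_rfl hge
        omega
      refine absurd ?_ (hno v hvM)
      show p ^ n - 1 - p * v = k
      omega
    · simp [hdk]

end TTsec
section Master

variable (p s : ℕ) [Fact p.Prime]

abbrev Rg (e : ℕ) := AddMonoidAlgebra ℤ_[p] (ZMod (p ^ e))

def uu (e : ℕ) : Rg p e := AddMonoidAlgebra.single 1 1

lemma uu_pow_q (e : ℕ) : (uu p e) ^ (p ^ e) = 1 := by
  unfold uu
  rw [AddMonoidAlgebra.single_pow, one_pow, nsmul_eq_mul, mul_one, ZMod.natCast_self,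
    ← AddMonoidAlgebra.one_def]

/-- the two-variable incarnation of `F(ut)·(t^{N-1}F(1/t)) - u^{1+L}·F(t)·((ut)^{N-1}F(1/(ut)))` -/
def Phi {S : Type*} [CommRing S] [Algebra ℤ_[p] S] (w : S) (b : ℕ → ℤ_[p]) (N L : ℕ) : S[X] :=
  TT w 1 b N * TT 1 1 (fun j => b (N - 1 - j)) N
    - C (w ^ (1 + L)) * (TT 1 1 b N * TT w 1 (fun j => b (N - 1 - j)) N)

def Le (l : ℕ → ℕ) (e i0 : ℕ) : ℕ := ∑ i ∈ Finset.range e, p ^ i * l (i0 + i)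

lemma Le_succ (l : ℕ → ℕ) (e i0 : ℕ) :
    Le p l (e + 1) i0 = l i0 + p * Le p l e (i0 + 1) := by
  unfold Le
  rw [Finset.sum_range_succ', pow_zero, one_mul, Nat.add_zero, add_comm]
  congr 1
  rw [Finset.mul_sum]
  refine Finset.sum_congr rfl fun i _ => ?_
  rw [pow_succ']
  rw [show i0 + (i + 1) = i0 + 1 + i by omega]
  ring

lemma master (l : ℕ → ℕ) (A : ℕ → ℕ → ℤ_[p])
    (hA1 : ∀ i, A i 0 = 1)
    (htrans : ∀ i n : ℕ, 1 ≤ n → ∃ ε : ℤ_[p], (ε = 1 ∨ ε = -1) ∧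
      ∀ j : ℕ, (p : ℤ_[p]) ^ n ∣
        (((∑ k ∈ Finset.range (p ^ n), C (A i k) * X ^ k)
            * Polynomial.reflect (p ^ n - 1)
                (∑ k ∈ Finset.range (p ^ n),
                  C (if p ∣ k then A (i + 1) (k / p) else 0) * X ^ k)
          - C (ε * ((-1 : ℤ_[p]) ^ s) ^ (l i)) * X ^ (l i)
            * Polynomial.reflect (p ^ n - 1)
                (∑ k ∈ Finset.range (p ^ n), C (A i k) * X ^ k)
            * (∑ k ∈ Finset.range (p ^ n),
                C (if p ∣ k then A (i + 1) (k / p) else 0) * X ^ k)).coeff j)) :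
    ∀ e n i0 : ℕ, e ≤ n → ∀ j : ℕ,
      algebraMap ℤ_[p] (Rg p e) ((p : ℤ_[p]) ^ (n - e + 1))
        ∣ (Phi p (uu p e) (A i0) (p ^ n) (Le p l e i0)).coeff j := by
  intro e
  induction e with
  | zero =>
    intro n i0 _ j
    have h10 : (1 : ZMod (p ^ 0)) = 0 := by
      rw [show (1 : ZMod (p ^ 0)) = ((1 : ℕ) : ZMod (p ^ 0)) by norm_cast,
        show (1 : ℕ) = p ^ 0 from (pow_zero p).symm, ZMod.natCast_self]
    have hu : uu p 0 = 1 := by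
      unfold uu
      rw [h10, ← AddMonoidAlgebra.one_def]
    rw [Phi, hu]
    simp
    exact dvd_zero _
  | succ e ih =>
    intro n i0 hen j0
    have hp : 0 < p := (Fact.out : p.Prime).pos
    have hn1 : 1 ≤ n := le_trans (Nat.le_add_left 1 e) hen
    have hN1 : 0 < p ^ n := pow_pos hp n
    have hM1 : 0 < p ^ (n - 1) := pow_pos hp (n - 1)
    obtain ⟨ε, hε, hdvd⟩ := htrans i0 n hn1
    set c : ℤ_[p] := ε * ((-1 : ℤ_[p]) ^ s) ^ (l i0) with hc
    have hcc : c * c = 1 := by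
      have h1 : ((-1 : ℤ_[p]) ^ s) ^ (l i0) * ((-1 : ℤ_[p]) ^ s) ^ (l i0) = 1 := by
        rw [← pow_add, ← pow_mul]
        rw [show s * (l i0 + l i0) = 2 * (s * l i0) by ring, pow_mul, neg_one_sq, one_pow]
      have hεε : ε * ε = 1 := by rcases hε with h | h <;> rw [h] <;> ring
      calc c * c = (ε * ε) * (((-1 : ℤ_[p]) ^ s) ^ (l i0) * ((-1 : ℤ_[p]) ^ s) ^ (l i0)) := by
            rw [hc]; ring
        _ = 1 := by rw [hεε, h1, mul_one]
    -- shorthand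
    set u : Rg p (e + 1) := uu p (e + 1) with hudef
    set β := algebraMap ℤ_[p] (Rg p (e + 1)) with hβ
    -- θ-images of the transformation polynomial
    have hθ : ∀ w : Rg p (e + 1),
        Polynomial.aeval (R := ℤ_[p]) (C w * X)
            ((∑ k ∈ Finset.range (p ^ n), C (A i0 k) * X ^ k)
                * Polynomial.reflect (p ^ n - 1)
                    (∑ k ∈ Finset.range (p ^ n),
                      C (if p ∣ k then A (i0 + 1) (k / p) else 0) * X ^ k)
              - C c * X ^ (l i0)
                * Polynomial.reflect (p ^ n - 1)
                    (∑ k ∈ Finset.range (p ^ n), C (A i0 k) * X ^ k)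
                * (∑ k ∈ Finset.range (p ^ n),
                    C (if p ∣ k then A (i0 + 1) (k / p) else 0) * X ^ k))
          = TT w 1 (A i0) (p ^ n)
              * (C (w ^ (p - 1)) * X ^ (p - 1)
                  * TT (w ^ p) p (fun v => A (i0 + 1) (p ^ (n - 1) - 1 - v)) (p ^ (n - 1)))
            - C (β c) * ((C w) ^ (l i0) * X ^ (l i0))
                * TT w 1 (fun j => A i0 (p ^ n - 1 - j)) (p ^ n)
                * TT (w ^ p) p (A (i0 + 1)) (p ^ (n - 1)) := by
      intro w
      rw [reflect_sum (fun k => if p ∣ k then A (i0 + 1) (k / p) else 0) (p ^ n) hN1,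
        reflect_sum (A i0) (p ^ n) hN1]
      rw [map_sub, map_mul, map_mul, map_mul, map_mul, map_pow, Polynomial.aeval_X,
        Polynomial.aeval_C, Polynomial.algebraMap_apply]
      rw [theta_TT, theta_TT, theta_TT, theta_TT]
      rw [TT_G n hn1 w (A (i0 + 1)), TT_RG n hn1 w (A (i0 + 1))]
      rw [mul_pow]
    have hEdvd : ∀ w : Rg p (e + 1), ∀ j : ℕ,
        β ((p : ℤ_[p]) ^ n) ∣
          (TT w 1 (A i0) (p ^ n)
              * (C (w ^ (p - 1)) * X ^ (p - 1)
                  * TT (w ^ p) p (fun v => A (i0 + 1) (p ^ (n - 1) - 1 - v)) (p ^ (n - 1)))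
            - C (β c) * ((C w) ^ (l i0) * X ^ (l i0))
                * TT w 1 (fun j => A i0 (p ^ n - 1 - j)) (p ^ n)
                * TT (w ^ p) p (A (i0 + 1)) (p ^ (n - 1))).coeff j := by
      intro w
      rw [← Polynomial.C_dvd_iff_dvd_coeff, ← hθ w]
      have h2 := (Polynomial.C_dvd_iff_dvd_coeff ((p : ℤ_[p]) ^ n) _).2 hdvd
      have h3 := map_dvd (Polynomial.aeval (R := ℤ_[p]) (C w * X)) h2
      rwa [Polynomial.aeval_C, Polynomial.algebraMap_apply, ← hβ] at h3
    -- the Frobenius-shifted Phi from the inductive hypothesis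
    have hker : (zmultiplesHom (ZMod (p ^ (e + 1))) ((p : ZMod (p ^ (e + 1)))))
        ((p ^ e : ℕ) : ℤ) = 0 := by
      rw [zmultiplesHom_apply, natCast_zsmul, nsmul_eq_mul, ← Nat.cast_mul, ← pow_succ,
        ZMod.natCast_self]
    set gmap : ZMod (p ^ e) →+ ZMod (p ^ (e + 1)) := ZMod.lift (p ^ e) ⟨_, hker⟩ with hgmap
    have hg1 : gmap 1 = (p : ZMod (p ^ (e + 1))) := by
      have h := ZMod.lift_coe (p ^ e) ⟨_, hker⟩ (1 : ℤ)
      rw [Int.cast_one] at h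
      simpa [zmultiplesHom_apply] using h
    set ι₀ : Rg p e →+* Rg p (e + 1) := AddMonoidAlgebra.mapDomainRingHom ℤ_[p] gmap
      with hι₀
    have hι₀β : ∀ x : ℤ_[p],
        ι₀ (algebraMap ℤ_[p] (Rg p e) x) = algebraMap ℤ_[p] (Rg p (e + 1)) x := by
      intro x
      rw [AddMonoidAlgebra.coe_algebraMap]
      simp [hι₀, AddMonoidAlgebra.mapDomainRingHom_apply, AddMonoidAlgebra.mapDomain_single,
        AddMonoidAlgebra.coe_algebraMap]
    have hι₀u : ι₀ (uu p e) = u ^ p := by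
      rw [hudef]
      unfold uu
      rw [AddMonoidAlgebra.single_pow, one_pow, nsmul_eq_mul, mul_one]
      simp [hι₀, AddMonoidAlgebra.mapDomainRingHom_apply, AddMonoidAlgebra.mapDomain_single, hg1]
    have hmapPhi :
        Polynomial.expand (Rg p (e + 1)) p
            ((Phi p (uu p e) (A (i0 + 1)) (p ^ (n - 1)) (Le p l e (i0 + 1))).map ι₀)
          = TT (u ^ p) p (A (i0 + 1)) (p ^ (n - 1))
              * TT 1 p (fun v => A (i0 + 1) (p ^ (n - 1) - 1 - v)) (p ^ (n - 1))
            - C (u ^ (p * (1 + Le p l e (i0 + 1))))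
              * (TT 1 p (A (i0 + 1)) (p ^ (n - 1))
                  * TT (u ^ p) p (fun v => A (i0 + 1) (p ^ (n - 1) - 1 - v)) (p ^ (n - 1))) := by
      rw [Phi]
      rw [Polynomial.map_sub, Polynomial.map_mul, Polynomial.map_mul, Polynomial.map_C,
        Polynomial.map_mul]
      rw [TT_map ι₀ hι₀β, TT_map ι₀ hι₀β, TT_map ι₀ hι₀β, TT_map ι₀ hι₀β]
      rw [map_sub, map_mul, map_mul, map_mul, Polynomial.expand_C]
      rw [TT_expand, TT_expand, TT_expand, TT_expand]
      rw [map_pow ι₀, hι₀u, map_one ι₀, ← pow_mul]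
      simp only [mul_one]
    have hPhiUp : ∀ j : ℕ,
        β ((p : ℤ_[p]) ^ (n - e)) ∣
          (TT (u ^ p) p (A (i0 + 1)) (p ^ (n - 1))
              * TT 1 p (fun v => A (i0 + 1) (p ^ (n - 1) - 1 - v)) (p ^ (n - 1))
            - C (u ^ (p * (1 + Le p l e (i0 + 1))))
              * (TT 1 p (A (i0 + 1)) (p ^ (n - 1))
                  * TT (u ^ p) p (fun v => A (i0 + 1) (p ^ (n - 1) - 1 - v)) (p ^ (n - 1)))).coeff
            j := by
      rw [← Polynomial.C_dvd_iff_dvd_coeff, ← hmapPhi]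
      have h4 := (Polynomial.C_dvd_iff_dvd_coeff
        (algebraMap ℤ_[p] (Rg p e) ((p : ℤ_[p]) ^ (n - 1 - e + 1))) _).2
        (ih (n - 1) (i0 + 1) (by omega))
      have h5 := map_dvd (Polynomial.mapRingHom ι₀) h4
      have h6 := map_dvd (Polynomial.expand (Rg p (e + 1)) p) h5
      rw [Polynomial.coe_mapRingHom, Polynomial.map_C, Polynomial.expand_C, hι₀β,
        show n - 1 - e + 1 = n - e by omega, ← hβ] at h6
      exact h6
    -- assemble via the grand identity
    have hLsucc := Le_succ p l e i0
    have hgrand := grand (S := (Rg p (e + 1))[X])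
      (F1 := TT (1 : Rg p (e + 1)) 1 (A i0) (p ^ n))
      (Fu := TT u 1 (A i0) (p ^ n))
      (R1 := TT (1 : Rg p (e + 1)) 1 (fun j => A i0 (p ^ n - 1 - j)) (p ^ n))
      (Ru := TT u 1 (fun j => A i0 (p ^ n - 1 - j)) (p ^ n))
      (g1 := TT (1 : Rg p (e + 1)) p (A (i0 + 1)) (p ^ (n - 1)))
      (gu := TT (u ^ p) p (A (i0 + 1)) (p ^ (n - 1)))
      (h1 := TT (1 : Rg p (e + 1)) p (fun v => A (i0 + 1) (p ^ (n - 1) - 1 - v)) (p ^ (n - 1)))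
      (hu := TT (u ^ p) p (fun v => A (i0 + 1) (p ^ (n - 1) - 1 - v)) (p ^ (n - 1)))
      (x := (X : (Rg p (e + 1))[X])) (v := C u) (cc := C (β c))
      (E1 := TT (1 : Rg p (e + 1)) 1 (A i0) (p ^ n)
              * (C ((1 : Rg p (e + 1)) ^ (p - 1)) * X ^ (p - 1)
                  * TT ((1 : Rg p (e + 1)) ^ p) p
                      (fun v => A (i0 + 1) (p ^ (n - 1) - 1 - v)) (p ^ (n - 1)))
            - C (β c) * ((C (1 : Rg p (e + 1))) ^ (l i0) * X ^ (l i0))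
                * TT (1 : Rg p (e + 1)) 1 (fun j => A i0 (p ^ n - 1 - j)) (p ^ n)
                * TT ((1 : Rg p (e + 1)) ^ p) p (A (i0 + 1)) (p ^ (n - 1)))
      (Eu := TT u 1 (A i0) (p ^ n)
              * (C (u ^ (p - 1)) * X ^ (p - 1)
                  * TT (u ^ p) p (fun v => A (i0 + 1) (p ^ (n - 1) - 1 - v)) (p ^ (n - 1)))
            - C (β c) * ((C u) ^ (l i0) * X ^ (l i0))
                * TT u 1 (fun j => A i0 (p ^ n - 1 - j)) (p ^ n)
                * TT (u ^ p) p (A (i0 + 1)) (p ^ (n - 1)))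
      (Ph := Phi p u (A i0) (p ^ n) (Le p l (e + 1) i0))
      (l := l i0) (L := Le p l (e + 1) i0) (L' := Le p l e (i0 + 1)) (d1 := p - 1) (pp := p)
      hLsucc (by omega)
      (by simp only [one_pow, map_one, one_mul, Polynomial.C_1]; try ring)
      (by simp only [map_pow]; try ring)
      (by rw [Phi]; simp only [map_pow]; try ring)
    -- divisibility of the right-hand side of the grand identity
    have hrhs : ∀ j : ℕ,
        β ((p : ℤ_[p]) ^ (n - e)) ∣
          (C (β c) * X ^ (l i0) * (C u) ^ (l i0)
            * Phi p u (A i0) (p ^ n) (Le p l (e + 1) i0)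
            * TT (1 : Rg p (e + 1)) p (A (i0 + 1)) (p ^ (n - 1))
            * TT (u ^ p) p (A (i0 + 1)) (p ^ (n - 1))).coeff j := by
      intro j
      rw [hgrand, Polynomial.coeff_add, Polynomial.coeff_sub]
      have hwiden : β ((p : ℤ_[p]) ^ (n - e)) ∣ β ((p : ℤ_[p]) ^ n) :=
        map_dvd β (pow_dvd_pow (p : ℤ_[p]) (by omega))
      have t1 : β ((p : ℤ_[p]) ^ (n - e)) ∣
          ((TT (u ^ p) p (A (i0 + 1)) (p ^ (n - 1))
              * TT (1 : Rg p (e + 1)) p (fun v => A (i0 + 1) (p ^ (n - 1) - 1 - v)) (p ^ (n - 1))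
            - (C u) ^ (p * (1 + Le p l e (i0 + 1)))
              * (TT (1 : Rg p (e + 1)) p (A (i0 + 1)) (p ^ (n - 1))
                  * TT (u ^ p) p (fun v => A (i0 + 1) (p ^ (n - 1) - 1 - v))
                      (p ^ (n - 1))))).coeff j ∨ True := Or.inr trivial
      refine dvd_add (dvd_sub ?_ ?_) ?_
      · refine dvd_coeff_mul' (fun j' => ?_) j
        have := hPhiUp j'
        simp only [map_pow] at this ⊢
        exact this
      · exact dvd_coeff_mul' (fun j' => dvd_trans hwiden (hEdvd 1 j')) j
      · exact dvd_coeff_mul' (fun j' => dvd_trans hwiden (hEdvd u j')) j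
    -- cancel the invertible factors
    have s1 : C (β c) * X ^ (l i0) * (C u) ^ (l i0)
          * Phi p u (A i0) (p ^ n) (Le p l (e + 1) i0)
          * TT (1 : Rg p (e + 1)) p (A (i0 + 1)) (p ^ (n - 1))
          * TT (u ^ p) p (A (i0 + 1)) (p ^ (n - 1))
        = C (β c * u ^ (l i0))
          * (X ^ (l i0)
              * (Phi p u (A i0) (p ^ n) (Le p l (e + 1) i0)
                  * (TT (1 : Rg p (e + 1)) p (A (i0 + 1)) (p ^ (n - 1))
                      * TT (u ^ p) p (A (i0 + 1)) (p ^ (n - 1))))) := by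
      rw [Polynomial.C_mul, map_pow]
      ring
    have hzz : (β c * u ^ ((p ^ (e + 1) - 1) * l i0)) * (β c * u ^ (l i0)) = 1 := by
      have hq1 : 1 ≤ p ^ (e + 1) := Nat.one_le_pow _ _ hp
      have huq : u ^ ((p ^ (e + 1) - 1) * l i0) * u ^ (l i0) = 1 := by
        rw [← pow_add, show (p ^ (e + 1) - 1) * l i0 + l i0
            = ((p ^ (e + 1) - 1) + 1) * l i0 by ring, Nat.sub_add_cancel hq1, pow_mul,
          hudef, uu_pow_q, one_pow]
      calc (β c * u ^ ((p ^ (e + 1) - 1) * l i0)) * (β c * u ^ (l i0))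
          = (β c * β c) * (u ^ ((p ^ (e + 1) - 1) * l i0) * u ^ (l i0)) := by ring
        _ = 1 := by rw [huq, ← map_mul, hcc, map_one, mul_one]
    have s2 := cancel_C hzz (fun j => s1 ▸ hrhs j)
    have s3 := cancel_X_pow s2
    have hW : (TT (1 : Rg p (e + 1)) p (A (i0 + 1)) (p ^ (n - 1))
        * TT (u ^ p) p (A (i0 + 1)) (p ^ (n - 1))).coeff 0 = 1 := by
      rw [Polynomial.mul_coeff_zero, coeff_TT_zero _ _ _ _ hp hM1,
        coeff_TT_zero _ _ _ _ hp hM1, hA1, map_one, one_mul]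
    have s4 := cancel_coeff_zero_one hW s3
    have hne : n - (e + 1) + 1 = n - e := by omega
    rw [hne, hβ] at *
    exact s4 j0

end Master
section Final

variable (p : ℕ) [Fact p.Prime]

lemma single_form (e : ℕ) (x y : ℤ_[p]) (i : ℕ) :
    algebraMap ℤ_[p] (Rg p e) x * (uu p e) ^ i * algebraMap ℤ_[p] (Rg p e) y
      = AddMonoidAlgebra.single ((i : ZMod (p ^ e))) (x * y) := by
  unfold uu
  rw [AddMonoidAlgebra.coe_algebraMap]
  simp only [Function.comp_apply, Algebra.algebraMap_self, RingHom.id_apply]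
  rw [AddMonoidAlgebra.single_pow, one_pow, AddMonoidAlgebra.single_mul_single,
    AddMonoidAlgebra.single_mul_single]
  congr 1
  · rw [nsmul_eq_mul, mul_one, zero_add, add_zero]
  · ring

lemma single_form2 (e : ℕ) (x y : ℤ_[p]) (c j : ℕ) :
    (uu p e) ^ c * (algebraMap ℤ_[p] (Rg p e) x * (algebraMap ℤ_[p] (Rg p e) y * (uu p e) ^ j))
      = AddMonoidAlgebra.single (((c + j : ℕ)) : ZMod (p ^ e)) (x * y) := by
  unfold uu
  rw [AddMonoidAlgebra.coe_algebraMap]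
  simp only [Function.comp_apply, Algebra.algebraMap_self, RingHom.id_apply]
  rw [AddMonoidAlgebra.single_pow, AddMonoidAlgebra.single_pow, one_pow, one_pow,
    AddMonoidAlgebra.single_mul_single, AddMonoidAlgebra.single_mul_single,
    AddMonoidAlgebra.single_mul_single]
  congr 1
  · rw [nsmul_eq_mul, nsmul_eq_mul, mul_one, mul_one, zero_add, Nat.cast_add, zero_add]
  · ring

lemma achain (a : ℕ → ℤ_[p]) (l : ℕ → ℕ)
    (hla : ∀ i, a i + (l i : ℤ_[p]) = (p : ℤ_[p]) * a (i + 1)) :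
    ∀ e : ℕ, a 0 + ((Le p l e 0 : ℕ) : ℤ_[p]) = (p : ℤ_[p]) ^ e * a e := by
  intro e
  induction e with
  | zero => simp [Le]
  | succ e ih =>
    have hLs : Le p l (e + 1) 0 = Le p l e 0 + p ^ e * l (0 + e) :=
      Finset.sum_range_succ _ _
    rw [hLs, Nat.zero_add]
    push_cast
    calc a 0 + (((Le p l e 0 : ℕ) : ℤ_[p]) + (p : ℤ_[p]) ^ e * (l e : ℤ_[p]))
        = (a 0 + ((Le p l e 0 : ℕ) : ℤ_[p])) + (p : ℤ_[p]) ^ e * (l e : ℤ_[p]) := by ring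
      _ = (p : ℤ_[p]) ^ e * a e + (p : ℤ_[p]) ^ e * (l e : ℤ_[p]) := by rw [ih]
      _ = (p : ℤ_[p]) ^ e * (a e + (l e : ℤ_[p])) := by ring
      _ = (p : ℤ_[p]) ^ e * ((p : ℤ_[p]) * a (e + 1)) := by rw [hla e]
      _ = (p : ℤ_[p]) ^ (e + 1) * a (e + 1) := by rw [pow_succ]; ring

lemma bridge (a : ℕ → ℤ_[p]) (l : ℕ → ℕ)
    (hla : ∀ i, a i + (l i : ℤ_[p]) = (p : ℤ_[p]) * a (i + 1))
    (e n j k : ℕ) (he : e ≤ n) (hj : j + 1 ≤ p ^ n) :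
    ((p : ℤ_[p]) ^ e ∣ ((p ^ n - j - 1 : ℕ) : ℤ_[p]) + (k : ℤ_[p]) + a 0)
      ↔ (((1 + Le p l e 0 + j : ℕ)) : ZMod (p ^ e)) = (k : ZMod (p ^ e)) := by
  have hach := achain p a l hla e
  have ha0 : a 0 = (p : ℤ_[p]) ^ e * a e - ((Le p l e 0 : ℕ) : ℤ_[p]) := by
    linear_combination hach
  have hdvd_iff : ∀ x : ℤ_[p], (p : ℤ_[p]) ^ e ∣ x ↔ PadicInt.toZModPow e x = 0 := fun x => by
    rw [← Ideal.mem_span_singleton, ← PadicInt.ker_toZModPow, RingHom.mem_ker]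
  rw [ha0, hdvd_iff]
  have hmap : PadicInt.toZModPow (p := p) e
        (((p ^ n - j - 1 : ℕ) : ℤ_[p]) + (k : ℤ_[p])
          + ((p : ℤ_[p]) ^ e * a e - ((Le p l e 0 : ℕ) : ℤ_[p])))
      = ((p ^ n - j - 1 + k : ℕ) : ZMod (p ^ e)) - ((Le p l e 0 : ℕ) : ZMod (p ^ e)) := by
    rw [map_add, map_add, map_sub, map_mul, map_pow, map_natCast, map_natCast, map_natCast,
      map_natCast]
    have h0 : ((p : ZMod (p ^ e))) ^ e = 0 := by
      rw [← Nat.cast_pow, ZMod.natCast_self]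
    rw [h0, zero_mul]
    push_cast
    ring
  rw [hmap]
  have hc1 : ((p ^ n - j - 1 + k : ℕ) : ZMod (p ^ e))
      = (k : ZMod (p ^ e)) - (j : ZMod (p ^ e)) - 1 := by
    have hsub : p ^ n - j - 1 = p ^ n - (j + 1) := by omega
    rw [Nat.cast_add, hsub, Nat.cast_sub hj]
    have hpn0 : ((p ^ n : ℕ) : ZMod (p ^ e)) = 0 := by
      rw [show p ^ n = p ^ e * p ^ (n - e) by rw [← pow_add]; congr 1; omega,
        Nat.cast_mul, ZMod.natCast_self, zero_mul]
    rw [hpn0]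
    push_cast
    ring
  rw [hc1]
  constructor
  · intro h
    push_cast
    linear_combination -h
  · intro h
    push_cast at h
    linear_combination -h

end Final

end DworkAux


/-- Lemma 4.8 of the paper: assume the transformation formula
`𝓕^Dw_{a^{(i)}}(t) = ±((-1)^s t)^{l_i} 𝓕^Dw_{a^{(i)}}(t⁻¹)` (Conjecture 4.7)
holds for every iterated Dwork prime `a^{(i)}`, in the sense that for every
`n ≥ 1` the truncations `F_i := [F_{a^{(i)}}(t)]_{<p^n}`,
`G_i := [F_{a^{(i+1)}}(t^p)]_{<p^n}` satisfy the cross-multiplied Laurent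
congruence `F_i(t)·t^{p^n-1}G_i(t⁻¹) ≡ ε·((-1)^s)^{l_i} t^{l_i}·
t^{p^n-1}F_i(t⁻¹)·G_i(t) mod p^n` for some sign `ε = ±1` (here
`t^{p^n-1}f(t⁻¹)` is `Polynomial.reflect (p^n-1)`).  Then for all `n ≥ 1`,
`0 ≤ d ≤ n`, `0 ≤ m ≤ p^n - 1` and `k ≥ 0`:
`∑_{i ≡ k mod p^{n-d}, i+j=m} A_i A_{p^n-j-1}
  ≡ ∑_{p^n-j'-1 ≡ -k-a mod p^{n-d}, i'+j'=m} A_{i'} A_{p^n-j'-1} mod p^{d+1}`. -/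
theorem coefficient_congruence_of_dwork_transformation
    (p s : ℕ) [Fact p.Prime] (hs : 1 ≤ s)
    -- `a i` is the `i`-th iterated Dwork prime `a^{(i)}` of `a = a 0`
    (a : ℕ → ℤ_[p]) (ha : ∀ m : ℕ, a 0 ≠ -(m : ℤ_[p]))
    (l : ℕ → ℕ) (hl : ∀ i, l i < p)
    (hla : ∀ i, a i + (l i : ℤ_[p]) = (p : ℤ_[p]) * a (i + 1))
    -- `A i k` is the `k`-th coefficient of `F_{a^{(i)}}(t)`
    (A : ℕ → ℕ → ℤ_[p])
    (hA : ∀ i k, (A i k : ℚ_[p]) =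
      ((ascPochhammer ℚ_[p] k).eval (a i : ℚ_[p]) / (k.factorial : ℚ_[p])) ^ s)
    -- the transformation formula (Conjecture 4.7) for every `a^{(i)}`
    (htrans : ∀ i n : ℕ, 1 ≤ n → ∃ ε : ℤ_[p], (ε = 1 ∨ ε = -1) ∧
      ∀ j : ℕ, (p : ℤ_[p]) ^ n ∣
        (((∑ k ∈ Finset.range (p ^ n), C (A i k) * X ^ k)
            * Polynomial.reflect (p ^ n - 1)
                (∑ k ∈ Finset.range (p ^ n),
                  C (if p ∣ k then A (i + 1) (k / p) else 0) * X ^ k)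
          - C (ε * ((-1 : ℤ_[p]) ^ s) ^ (l i)) * X ^ (l i)
            * Polynomial.reflect (p ^ n - 1)
                (∑ k ∈ Finset.range (p ^ n), C (A i k) * X ^ k)
            * (∑ k ∈ Finset.range (p ^ n),
                C (if p ∣ k then A (i + 1) (k / p) else 0) * X ^ k)).coeff j)) :
    ∀ n d m k : ℕ, 1 ≤ n → d ≤ n → m ≤ p ^ n - 1 →
      (p : ℤ_[p]) ^ (d + 1) ∣
        ((∑ i ∈ Finset.range (m + 1),
            if i % p ^ (n - d) = k % p ^ (n - d) then
              A 0 i * A 0 (p ^ n - (m - i) - 1) else 0)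
          - ∑ j ∈ Finset.range (m + 1),
              if (p : ℤ_[p]) ^ (n - d) ∣
                  (((p ^ n - j - 1 : ℕ) : ℤ_[p]) + (k : ℤ_[p]) + a 0) then
                A 0 (m - j) * A 0 (p ^ n - j - 1) else 0) := by
  intro n d m k hn hd hm
  have hp : 0 < p := (Fact.out : p.Prime).pos
  have hN1 : 0 < p ^ n := pow_pos hp n
  have hm' : m < p ^ n := by omega
  have hA1 : ∀ i, A i 0 = 1 := by
    intro i
    have h := hA i 0
    rw [ascPochhammer_zero, Polynomial.eval_one, Nat.factorial_zero, Nat.cast_one, div_one,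
      one_pow] at h
    have h1 : ((A i 0 : ℤ_[p]) : ℚ_[p]) = ((1 : ℤ_[p]) : ℚ_[p]) := by rw [h]; simp
    exact Subtype.coe_injective h1
  set e := n - d with he
  have hkey := DworkAux.master p s l A hA1 htrans e n 0 (by omega) m
  rw [show n - e + 1 = d + 1 by omega] at hkey
  obtain ⟨y, hy⟩ := hkey
  set L := DworkAux.Le p l e 0 with hLdef
  -- the coordinate of the `m`-th coefficient of `Phi` at `k`
  have hcoord : AddMonoidAlgebra.coeff ((DworkAux.Phi p (DworkAux.uu p e) (A 0) (p ^ n) L).coeff m)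
        ((k : ZMod (p ^ e)))
      = (∑ i ∈ Finset.range (m + 1),
          if (i : ZMod (p ^ e)) = (k : ZMod (p ^ e)) then
            A 0 i * A 0 (p ^ n - (m - i) - 1) else 0)
        - ∑ i ∈ Finset.range (m + 1),
            if (((1 + L + (m - i) : ℕ)) : ZMod (p ^ e)) = (k : ZMod (p ^ e)) then
              A 0 i * A 0 (p ^ n - (m - i) - 1) else 0 := by
    rw [DworkAux.Phi, Polynomial.coeff_sub, AddMonoidAlgebra.coeff_sub, Finsupp.sub_apply]
    congr 1
    · rw [Polynomial.coeff_mul, Finset.Nat.sum_antidiagonal_eq_sum_range_succ_mk,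
        AddMonoidAlgebra.coeff_sum, Finsupp.finset_sum_apply]
      refine Finset.sum_congr rfl fun i hi => ?_
      have hi' : i ≤ m := by
        have := Finset.mem_range.1 hi; omega
      rw [DworkAux.coeff_TT_one, DworkAux.coeff_TT_one,
        if_pos (show i < p ^ n by omega), if_pos (show m - i < p ^ n by omega),
        one_pow, mul_one, DworkAux.single_form, AddMonoidAlgebra.coeff_single, Finsupp.single_apply,
        show p ^ n - 1 - (m - i) = p ^ n - (m - i) - 1 from by omega]
    · rw [Polynomial.coeff_C_mul, Polynomial.coeff_mul,
        Finset.Nat.sum_antidiagonal_eq_sum_range_succ_mk, Finset.mul_sum,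
        AddMonoidAlgebra.coeff_sum, Finsupp.finset_sum_apply]
      refine Finset.sum_congr rfl fun i hi => ?_
      have hi' : i ≤ m := by
        have := Finset.mem_range.1 hi; omega
      rw [DworkAux.coeff_TT_one, DworkAux.coeff_TT_one,
        if_pos (show i < p ^ n by omega), if_pos (show m - i < p ^ n by omega),
        one_pow, mul_one, DworkAux.single_form2, AddMonoidAlgebra.coeff_single, Finsupp.single_apply,
        show p ^ n - 1 - (m - i) = p ^ n - (m - i) - 1 from by omega]
  -- identify the two goal sums
  have hS1 : (∑ i ∈ Finset.range (m + 1),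
        if i % p ^ e = k % p ^ e then A 0 i * A 0 (p ^ n - (m - i) - 1) else 0)
      = ∑ i ∈ Finset.range (m + 1),
          if (i : ZMod (p ^ e)) = (k : ZMod (p ^ e)) then
            A 0 i * A 0 (p ^ n - (m - i) - 1) else 0 := by
    refine Finset.sum_congr rfl fun i hi => ?_
    have hiff : (i % p ^ e = k % p ^ e) ↔ ((i : ZMod (p ^ e)) = (k : ZMod (p ^ e))) := by
      rw [ZMod.natCast_eq_natCast_iff]
      exact Iff.rfl
    exact if_congr hiff rfl rfl
  have hS2 : (∑ j ∈ Finset.range (m + 1),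
        if (p : ℤ_[p]) ^ e ∣ (((p ^ n - j - 1 : ℕ) : ℤ_[p]) + (k : ℤ_[p]) + a 0) then
          A 0 (m - j) * A 0 (p ^ n - j - 1) else 0)
      = ∑ i ∈ Finset.range (m + 1),
          if (((1 + L + (m - i) : ℕ)) : ZMod (p ^ e)) = (k : ZMod (p ^ e)) then
            A 0 i * A 0 (p ^ n - (m - i) - 1) else 0 := by
    rw [← Finset.sum_range_reflect]
    refine Finset.sum_congr rfl fun i hi => ?_
    have hi' : i ≤ m := by
      have := Finset.mem_range.1 hi; omega
    rw [show m + 1 - 1 - i = m - i by omega, show m - (m - i) = i by omega]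
    exact if_congr
      (DworkAux.bridge p a l hla e n (m - i) k (by omega) (by omega)) rfl rfl
  rw [hS1, hS2, ← hcoord]
  refine ⟨AddMonoidAlgebra.coeff y ((k : ZMod (p ^ e))), ?_⟩
  calc AddMonoidAlgebra.coeff ((DworkAux.Phi p (DworkAux.uu p e) (A 0) (p ^ n) L).coeff m) ((k : ZMod (p ^ e)))
      = AddMonoidAlgebra.coeff (algebraMap ℤ_[p] (DworkAux.Rg p e) ((p : ℤ_[p]) ^ (d + 1)) * y)
          ((k : ZMod (p ^ e))) := by rw [hy]
    _ = (p : ℤ_[p]) ^ (d + 1) * AddMonoidAlgebra.coeff y ((k : ZMod (p ^ e))) := by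
        rw [← Algebra.smul_def]
        exact AddMonoidAlgebra.coeff_smul_apply _ _ _

end
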